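/- There exists a constant M₁ > 0 such that for all k ∈ H¹(0,1), ‖k‖_{L²(0,1)} ≤ M₁ · ‖k‖_{H¹(0,1)}^{1/3} · ‖k‖_{L¹(0,1)}^{2/3}. -/

import Mathlib

open MeasureTheory

lemma cs_aux {f : ℝ → ℝ} {a b : ℝ} (hab : a ≤ b)
    (hf : IntervalIntegrable f volume a b)
    (hf2 : IntervalIntegrable (fun x => f x ^ 2) volume a b) :
    (∫ x in a..b, f x) ^ 2 ≤ (b - a) * ∫ x in a..b, f x ^ 2 := by
  rcases eq_or_lt_of_le hab with rfl | hlt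
  · simp
  have hL : 0 < b - a := by linarith
  set I := ∫ x in a..b, f x with hI
  set J := ∫ x in a..b, f x ^ 2 with hJ
  set c : ℝ := I / (b - a) with hc
  have h0 : 0 ≤ ∫ x in a..b, (f x - c) ^ 2 :=
    intervalIntegral.integral_nonneg hab (fun x _ => sq_nonneg _)
  have hexp : ∫ x in a..b, (f x - c) ^ 2
      = J - 2 * c * I + c ^ 2 * (b - a) := by
    have h1 : ∀ x, (f x - c) ^ 2 = f x ^ 2 - (2 * c) * f x + c ^ 2 := by intro x; ring
    simp_rw [h1]
    rw [intervalIntegral.integral_add ((hf2.sub (hf.const_mul (2*c)))) intervalIntegrable_const,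
      intervalIntegral.integral_sub hf2 (hf.const_mul (2*c)),
      intervalIntegral.integral_const_mul, intervalIntegral.integral_const]
    rw [smul_eq_mul]
    ring
  rw [hexp] at h0
  have hcL : c * (b - a) = I := by rw [hc]; field_simp
  nlinarith [h0, sq_nonneg (I - c*(b-a))]

set_option maxHeartbeats 1000000 in
theorem stmt_6 :
    ∃ M₁ > (0:ℝ), ∀ k k' : ℝ → ℂ,
      IntervalIntegrable k' volume 0 1 →
      IntervalIntegrable (fun x => ‖k' x‖ ^ 2) volume 0 1 →
      (∀ x ∈ Set.Icc (0:ℝ) 1, k x = k 0 + ∫ s in (0:ℝ)..x, k' s) →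
      (∫ x in (0:ℝ)..1, ‖k x‖ ^ 2) ^ ((1:ℝ)/2) ≤
        M₁ * ((∫ x in (0:ℝ)..1, ‖k x‖ ^ 2) + ∫ x in (0:ℝ)..1, ‖k' x‖ ^ 2) ^ ((1:ℝ)/6) *
          (∫ x in (0:ℝ)..1, ‖k x‖) ^ ((2:ℝ)/3) := by
  refine ⟨3, by norm_num, ?_⟩
  intro k k' hk'1 hk'2 hrep
  set A := ∫ x in (0:ℝ)..1, ‖k x‖ ^ 2 with hA
  set B := ∫ x in (0:ℝ)..1, ‖k' x‖ ^ 2 with hB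
  set C := ∫ x in (0:ℝ)..1, ‖k x‖ with hC
  have h01 : (0:ℝ) ≤ 1 := by norm_num
  -- continuity of k on [0,1]
  have hkc : ContinuousOn k (Set.Icc (0:ℝ) 1) := by
    have hprim : ContinuousOn (fun b => k 0 + ∫ s in (0:ℝ)..b, k' s) (Set.uIcc (0:ℝ) 1) :=
      continuousOn_const.add (intervalIntegral.continuousOn_primitive_interval' hk'1
        Set.left_mem_uIcc)
    rw [Set.uIcc_of_le h01] at hprim
    exact hprim.congr hrep
  have hknormc : ContinuousOn (fun x => ‖k x‖) (Set.uIcc (0:ℝ) 1) := by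
    rw [Set.uIcc_of_le h01]; exact hkc.norm
  have hkI : IntervalIntegrable (fun x => ‖k x‖) volume 0 1 := hknormc.intervalIntegrable
  have hk2I : IntervalIntegrable (fun x => ‖k x‖ ^ 2) volume 0 1 :=
    (hknormc.pow 2).intervalIntegrable
  have hk'nI : IntervalIntegrable (fun x => ‖k' x‖) volume 0 1 := hk'1.norm
  have hA0 : 0 ≤ A := intervalIntegral.integral_nonneg h01 (fun x _ => by positivity)
  have hB0 : 0 ≤ B := intervalIntegral.integral_nonneg h01 (fun x _ => by positivity)
  have hC0 : 0 ≤ C := intervalIntegral.integral_nonneg h01 (fun x _ => by positivity)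
  have hCSA : C ^ 2 ≤ A := by
    have := cs_aux h01 hkI hk2I
    simpa using this
  -- the main intermediate bound
  have main : ∀ h : ℝ, 0 < h → h ≤ 1/2 →
      A ≤ (C / h + Real.sqrt h * Real.sqrt B) * C := by
    intro h hh0 hh2
    have key : ∀ x ∈ Set.Icc (0:ℝ) 1, ‖k x‖ ≤ C / h + Real.sqrt h * Real.sqrt B := by
      intro x hx
      obtain ⟨hx0, hx1⟩ := hx
      obtain ⟨a, ha0, hah1, hax1, hax2⟩ :
          ∃ a : ℝ, 0 ≤ a ∧ a + h ≤ 1 ∧ a ≤ x ∧ x ≤ a + h := by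
        rcases le_or_gt x (1/2) with hc | hc
        · exact ⟨x, hx0, by linarith, le_refl x, by linarith⟩
        · exact ⟨x - h, by linarith, by linarith, by linarith, by linarith⟩
      have haah : a ≤ a + h := by linarith
      have hsubset : Set.uIcc a (a+h) ⊆ Set.uIcc (0:ℝ) 1 := by
        rw [Set.uIcc_of_le haah, Set.uIcc_of_le h01]
        exact Set.Icc_subset_Icc ha0 hah1
      have hk'nsub : IntervalIntegrable (fun s => ‖k' s‖) volume a (a+h) :=
        hk'nI.mono_set hsubset
      set D := ∫ s in a..(a+h), ‖k' s‖ with hD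
      have hD0 : 0 ≤ D := intervalIntegral.integral_nonneg haah (fun s _ => norm_nonneg _)
      -- subinterval integral bound helper
      have hsub : ∀ u v : ℝ, a ≤ u → u ≤ v → v ≤ a + h →
          (∫ s in u..v, ‖k' s‖) ≤ D :=
        fun u v h1 h2 h3 => intervalIntegral.integral_mono_interval h1 h2 h3
          (Filter.Eventually.of_forall fun s => norm_nonneg _) hk'nsub
      -- pointwise bound over t
      have hptt : ∀ t ∈ Set.Icc a (a+h), ‖k x‖ ≤ ‖k t‖ + D := by
        intro t ht
        obtain ⟨hta, hth⟩ := ht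
        have htx : Set.uIcc (0:ℝ) t ⊆ Set.uIcc (0:ℝ) 1 := by
          rw [Set.uIcc_of_le (by linarith : (0:ℝ) ≤ t), Set.uIcc_of_le h01]
          exact Set.Icc_subset_Icc le_rfl (by linarith)
        have hxx : Set.uIcc (0:ℝ) x ⊆ Set.uIcc (0:ℝ) 1 := by
          rw [Set.uIcc_of_le hx0, Set.uIcc_of_le h01]
          exact Set.Icc_subset_Icc le_rfl hx1
        have hdiff : k x - k t = ∫ s in t..x, k' s := by
          rw [hrep x ⟨hx0, hx1⟩, hrep t ⟨by linarith, by linarith⟩]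
          have := intervalIntegral.integral_interval_sub_left
            (hk'1.mono_set hxx) (hk'1.mono_set htx)
          rw [← this]; ring
        have hnormint : ‖∫ s in t..x, k' s‖ ≤ D := by
          refine le_trans (intervalIntegral.norm_integral_le_abs_integral_norm) ?_
          rcases le_total t x with htx' | htx'
          · rw [abs_of_nonneg (intervalIntegral.integral_nonneg htx' fun s _ => norm_nonneg _)]
            exact hsub t x hta htx' (by linarith)
          · rw [intervalIntegral.integral_symm, abs_neg,
              abs_of_nonneg (intervalIntegral.integral_nonneg htx' fun s _ => norm_nonneg _)]
            exact hsub x t hax1 htx' hth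
        have h1 : ‖k x‖ - ‖k t‖ ≤ ‖k x - k t‖ := norm_sub_norm_le _ _
        rw [hdiff] at h1
        linarith
      -- integrate over t
      have hconst : IntervalIntegrable (fun _ : ℝ => ‖k x‖) volume a (a+h) :=
        intervalIntegrable_const
      have hrhsI : IntervalIntegrable (fun t => ‖k t‖ + D) volume a (a+h) :=
        (hkI.mono_set hsubset).add intervalIntegrable_const
      have hint := intervalIntegral.integral_mono_on haah hconst hrhsI hptt
      rw [intervalIntegral.integral_const, intervalIntegral.integral_add
        (hkI.mono_set hsubset) intervalIntegrable_const,
        intervalIntegral.integral_const, smul_eq_mul, smul_eq_mul,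
        add_sub_cancel_left] at hint
      -- bound the pieces
      have hsubC : (∫ t in a..(a+h), ‖k t‖) ≤ C :=
        intervalIntegral.integral_mono_interval ha0 haah hah1
          (Filter.Eventually.of_forall fun s => norm_nonneg _) hkI
      have hDB : D ≤ Real.sqrt h * Real.sqrt B := by
        have hcs := cs_aux haah hk'nsub ((hk'2).mono_set hsubset)
        rw [add_sub_cancel_left] at hcs
        have hsB : (∫ s in a..(a+h), ‖k' s‖ ^ 2) ≤ B :=
          intervalIntegral.integral_mono_interval ha0 haah hah1
            (Filter.Eventually.of_forall fun s => by positivity) hk'2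
        have hD2 : D ^ 2 ≤ h * B := by
          refine le_trans hcs ?_
          exact mul_le_mul_of_nonneg_left hsB hh0.le
        rw [← Real.sqrt_mul hh0.le]
        exact (Real.le_sqrt hD0 (by positivity)).2 hD2
      have hkx : ‖k x‖ ≤ C / h + D := by
        have h4 : h * ‖k x‖ ≤ C + h * D := by linarith
        have h5 : ‖k x‖ ≤ (C + h * D) / h := by
          rw [le_div_iff₀ hh0]; nlinarith [h4]
        have h6 : (C + h * D) / h = C / h + D := by field_simp
        rw [h6] at h5; exact h5
      linarith
    -- now integrate the pointwise bound
    have hb0 : 0 ≤ C / h + Real.sqrt h * Real.sqrt B := by positivity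
    have hAle : A ≤ ∫ x in (0:ℝ)..1, (C / h + Real.sqrt h * Real.sqrt B) * ‖k x‖ := by
      refine intervalIntegral.integral_mono_on h01 hk2I (hkI.const_mul _) ?_
      intro x hx
      have := key x hx
      have h2 : ‖k x‖ ^ 2 = ‖k x‖ * ‖k x‖ := sq (‖k x‖) ▸ by ring
      nlinarith [norm_nonneg (k x)]
    rwa [intervalIntegral.integral_const_mul] at hAle
  -- key polynomial inequality
  have KEY : A ^ 3 ≤ 729 * (A + B) * C ^ 4 := by
    rcases le_or_gt B (8 * C^2) with hcase | hcase
    · -- h = 1/2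
      have hm := main (1/2) (by norm_num) (by norm_num)
      have hsq : Real.sqrt (1/2) * Real.sqrt B ≤ 2 * C := by
        rw [← Real.sqrt_mul (by norm_num)]
        have : (1/2 : ℝ) * B ≤ (2*C)^2 := by nlinarith
        calc Real.sqrt ((1/2)*B) ≤ Real.sqrt ((2*C)^2) := Real.sqrt_le_sqrt this
          _ = 2*C := Real.sqrt_sq (by linarith)
      have hA4 : A ≤ 4 * C^2 := by
        have : (C / (1/2) + Real.sqrt (1/2) * Real.sqrt B) * C ≤ (2*C + 2*C) * C := by
          have : C / (1/2) = 2 * C := by ring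
          nlinarith [this, hsq, hC0]
        nlinarith [hm]
      nlinarith [pow_le_pow_left₀ hA0 hA4 3, hCSA, hA0, hB0, hC0,
        mul_nonneg (mul_nonneg hC0 hC0) (mul_nonneg hC0 hC0),
        mul_nonneg hB0 (mul_nonneg (mul_nonneg hC0 hC0) (mul_nonneg hC0 hC0))]
    · -- B > 8 C^2
      rcases eq_or_lt_of_le hC0 with hCz | hCpos
      · -- C = 0
        have hm := main (1/2) (by norm_num) (by norm_num)
        rw [← hCz] at hm
        simp at hm
        have : A = 0 := le_antisymm hm hA0
        rw [this, ← hCz]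
        norm_num
      · have hBpos : 0 < B := by nlinarith
        set h : ℝ := (C^2 / B) ^ ((1:ℝ)/3) with hh
        have hq : 0 < C^2 / B := div_pos (by positivity) hBpos
        have hh0 : 0 < h := Real.rpow_pos_of_pos hq _
        have hcube : h ^ 3 = C^2 / B := by
          rw [hh, ← Real.rpow_natCast ((C^2/B) ^ ((1:ℝ)/3)) 3, ← Real.rpow_mul hq.le]
          norm_num
        have hh2 : h ≤ 1/2 := by
          have h18 : C^2 / B ≤ 1/8 := by
            rw [div_le_iff₀ hBpos]; nlinarith
          have : h ≤ (1/8 : ℝ) ^ ((1:ℝ)/3) := Real.rpow_le_rpow hq.le h18 (by norm_num)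
          have h8 : ((1:ℝ)/8) ^ ((1:ℝ)/3) = 1/2 := by
            rw [show (1/8 : ℝ) = (1/2) ^ (3:ℕ) by norm_num,
              ← Real.rpow_natCast (1/2 : ℝ) 3, ← Real.rpow_mul (by norm_num)]
            norm_num
          linarith [h8 ▸ this]
        have hm := main h hh0 hh2
        have hcube' : h ^ 3 * B = C ^ 2 := by
          rw [hcube]; field_simp
        set s : ℝ := Real.sqrt h * Real.sqrt B with hs
        have hs0 : 0 ≤ s := by positivity
        have hs2 : s ^ 2 = h * B := by
          rw [hs, mul_pow, Real.sq_sqrt hh0.le, Real.sq_sqrt hB0]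
        have h1 : A * h ≤ C^2 + s * C * h := by
          calc A * h ≤ ((C/h + s) * C) * h := mul_le_mul_of_nonneg_right hm hh0.le
            _ = C^2 + s * C * h := by field_simp
        have hsC : s * C = h^2 * B := by
          have hsq : (s*C)^2 = (h^2*B)^2 := by
            rw [mul_pow, hs2, ← hcube']; ring
          have hhb : (0:ℝ) ≤ h^2*B := by positivity
          calc s*C = Real.sqrt ((s*C)^2) := (Real.sqrt_sq (by positivity)).symm
            _ = Real.sqrt ((h^2*B)^2) := by rw [hsq]
            _ = h^2*B := Real.sqrt_sq hhb
        have h3 : A * h ≤ 2 * (h^3 * B) := by nlinarith [h1, hsC, hcube']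
        have hfin : A ≤ 2 * (h^2 * B) := by nlinarith [h3, hh0]
        have hc4 : C^4 = h^6 * B^2 := by
          rw [show C^4 = (C^2)^2 by ring, ← hcube']; ring
        have hc4B : C^4 * B = h^6 * B^3 := by rw [hc4]; ring
        have cube : A^3 ≤ (2*(h^2*B))^3 := pow_le_pow_left₀ hA0 hfin 3
        nlinarith [cube, hc4B, mul_nonneg hA0 (pow_nonneg hC0 4),
          mul_nonneg (pow_nonneg hC0 4) hB0]
  -- conclude with rpow algebra
  have hAB0 : (0:ℝ) ≤ A + B := by linarith
  have e1 : A ^ ((1:ℝ)/2) = (A ^ (3:ℕ)) ^ ((1:ℝ)/6) := by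
    rw [← Real.rpow_natCast A 3, ← Real.rpow_mul hA0]
    norm_num
  have e2 : (729 * (A+B) * C ^ (4:ℕ)) ^ ((1:ℝ)/6)
      = 3 * (A+B) ^ ((1:ℝ)/6) * C ^ ((2:ℝ)/3) := by
    rw [Real.mul_rpow (mul_nonneg (by norm_num) hAB0) (pow_nonneg hC0 4),
      Real.mul_rpow (by norm_num) hAB0]
    congr 1
    · congr 1
      rw [show (729:ℝ) = 3 ^ (6:ℕ) by norm_num, ← Real.rpow_natCast (3:ℝ) 6,
        ← Real.rpow_mul (by norm_num)]
      norm_num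
    · rw [← Real.rpow_natCast C 4, ← Real.rpow_mul hC0]
      norm_num
  rw [e1, ← e2]
  exact Real.rpow_le_rpow (pow_nonneg hA0 3) KEY (by norm_num)
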